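/- arXiv:1904.00279 — 2 statements merged into one kernel-verified Lean document; each statement's English description precedes it below -/
import Mathlib

section
/- Fix an integer k ≥ 2 and define Z_k(x) := ∑_{q (k+1)-free, q ≥ 1/x} φ(x, q) · f_k(q)². Then Z_k(x) = ∑_{q̃ squarefree, q̃^k ≥ 1/x} f_k(q̃)² · ∑_{ℓ | q̃^(k-1)} φ(ℓx, q̃). -/
open Finset Filter Asymptotics ArithmeticFunction Classical

/-- `q` is `k`-free: no `k`-th power of a prime divides `q`. -/
def KFree (k q : ℕ) : Prop := ∀ p : ℕ, p.Prime → ¬ p ^ k ∣ q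

/-- The radical (squarefree kernel) of `q`. -/
def rad (q : ℕ) : ℕ := ∏ p ∈ q.primeFactors, p

/-- `f_k(q) = ∏_{p ∣ rad q} 1/(p^k - 1)`. -/
noncomputable def fk (k q : ℕ) : ℝ := ∏ p ∈ q.primeFactors, 1 / ((p : ℝ) ^ k - 1)

/-- Two-parameter totient `φ(x,q) = #{1 ≤ m ≤ qx : gcd(m,q) = 1}`. -/
noncomputable def phi2 (x : ℝ) (q : ℕ) : ℕ :=
  ((Finset.Icc 1 ⌊(q : ℝ) * x⌋₊).filter fun m => Nat.gcd m q = 1).card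


/-- `Z_k(x) = ∑_{q (k+1)-free, q ≥ 1/x} φ(x,q) f_k(q)²`. -/
noncomputable def Z (k : ℕ) (x : ℝ) : ℝ :=
  ∑' q : ℕ, if KFree (k + 1) q ∧ 1 / x ≤ (q : ℝ) then (phi2 x q : ℝ) * (fk k q) ^ 2 else 0

-- basic vanishing
lemma phi2_eq_zero {x : ℝ} {q : ℕ} (h : (q : ℝ) * x < 1) : phi2 x q = 0 := by
  unfold phi2
  rw [Nat.floor_eq_zero.mpr h]
  simp

lemma tsum_toReal_ofReal {f : ℕ → ℝ} (hf : ∀ n, 0 ≤ f n) :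
    ∑' n, f n = (∑' n, ENNReal.ofReal (f n)).toReal := by
  by_cases h : Summable f
  · rw [← ENNReal.ofReal_tsum_of_nonneg hf h, ENNReal.toReal_ofReal (tsum_nonneg hf)]
  · rw [tsum_eq_zero_of_not_summable h]
    by_cases h2 : ∑' n, ENNReal.ofReal (f n) = ⊤
    · rw [h2]; simp
    · exact absurd ((ENNReal.summable_toReal h2).congr
        (fun n => ENNReal.toReal_ofReal (hf n))) h

lemma sqf_prod_primes (s : Finset ℕ) (hs : ∀ p ∈ s, p.Prime) : Squarefree (∏ p ∈ s, p) := by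
  induction s using Finset.induction_on with
  | empty => simpa using squarefree_one
  | @insert a s' ha ih =>
    rw [Finset.prod_insert ha]
    rw [Nat.squarefree_mul_iff]
    refine ⟨?_, (hs a (mem_insert_self a s')).prime.squarefree,
      ih fun p hp => hs p (mem_insert_of_mem hp)⟩
    · apply Nat.Coprime.prod_right
      intro p hp
      rw [Nat.coprime_primes (hs a (mem_insert_self a s')) (hs p (mem_insert_of_mem hp))]
      rintro rfl; exact ha hp

lemma rad_dvd (q : ℕ) : rad q ∣ q := Nat.prod_primeFactors_dvd q

lemma rad_squarefree (q : ℕ) : Squarefree (rad q) :=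
  sqf_prod_primes _ fun _ hp => Nat.prime_of_mem_primeFactors hp

lemma rad_ne_zero (q : ℕ) : rad q ≠ 0 := (rad_squarefree q).ne_zero

lemma primeFactors_rad (q : ℕ) : (rad q).primeFactors = q.primeFactors :=
  Nat.primeFactors_prod fun _ hp => Nat.prime_of_mem_primeFactors hp

lemma rad_of_squarefree {q : ℕ} (hq : Squarefree q) : rad q = q :=
  Nat.prod_primeFactors_of_squarefree hq

lemma fk_congr {k a b : ℕ} (h : a.primeFactors = b.primeFactors) : fk k a = fk k b := by
  unfold fk; rw [h]

-- q divides rad q ^ k for (k+1)-free q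
lemma dvd_rad_pow {k q : ℕ} (hq : q ≠ 0) (hK : KFree (k + 1) q) : q ∣ rad q ^ k := by
  rw [← Nat.factorization_le_iff_dvd hq (pow_ne_zero _ (rad_ne_zero q))]
  intro p
  by_cases hp : p.Prime
  · by_cases hpq : p ∣ q
    · have h1 : q.factorization p ≤ k := by
        by_contra hcon
        exact hK p hp ((Nat.Prime.pow_dvd_iff_le_factorization hp hq).mpr (by omega))
      have h2 : 1 ≤ (rad q).factorization p := by
        rw [← Nat.Prime.dvd_iff_one_le_factorization hp (rad_ne_zero q)]
        have hmem : p ∈ (rad q).primeFactors := by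
          rw [primeFactors_rad]; exact Nat.mem_primeFactors.mpr ⟨hp, hpq, hq⟩
        exact Nat.dvd_of_mem_primeFactors hmem
      calc q.factorization p ≤ k := h1
        _ ≤ k * (rad q).factorization p := by nlinarith
        _ = (rad q ^ k).factorization p := by
            rw [Nat.factorization_pow]; simp
    · simp [Nat.factorization_eq_zero_of_not_dvd hpq]
  · simp [Nat.factorization_eq_zero_of_not_prime _ hp]

lemma phi2_mul {x : ℝ} {q ℓ n : ℕ} (hq : q ≠ 0) (hdvd : ℓ ∣ q ^ n) :
    phi2 x (ℓ * q) = phi2 ((ℓ : ℝ) * x) q := by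
  unfold phi2
  have hfloor : ((ℓ * q : ℕ) : ℝ) * x = (q : ℝ) * ((ℓ : ℝ) * x) := by push_cast; ring
  rw [hfloor]
  congr 1
  apply Finset.filter_congr
  intro m _
  show Nat.Coprime m (ℓ * q) ↔ Nat.Coprime m q
  rw [Nat.coprime_mul_iff_right]
  exact ⟨fun h => h.2, fun h => ⟨(h.pow_right n).coprime_dvd_right hdvd, h⟩⟩

lemma primeFactors_mul_eq {q ℓ n : ℕ} (hq : q ≠ 0) (hn : n ≠ 0) (hℓ : ℓ ∣ q ^ n) :
    (ℓ * q).primeFactors = q.primeFactors := by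
  have hℓ0 : ℓ ≠ 0 := by
    rintro rfl
    exact (pow_ne_zero n hq) (zero_dvd_iff.mp hℓ)
  rw [Nat.primeFactors_mul hℓ0 hq, Finset.union_eq_right]
  exact (Nat.primeFactors_mono hℓ (pow_ne_zero n hq)).trans
    (by rw [Nat.primeFactors_pow q hn])

lemma kfree_mul {k q ℓ : ℕ} (hk : 2 ≤ k) (hq : Squarefree q) (hℓ : ℓ ∣ q ^ (k - 1)) :
    KFree (k + 1) (ℓ * q) := by
  have hq0 : q ≠ 0 := hq.ne_zero
  have hℓ0 : ℓ ≠ 0 := by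
    rintro rfl
    exact (pow_ne_zero (k-1) hq0) (zero_dvd_iff.mp hℓ)
  intro p pp hdvd
  have hne : ℓ * q ≠ 0 := mul_ne_zero hℓ0 hq0
  rw [Nat.Prime.pow_dvd_iff_le_factorization pp hne] at hdvd
  rw [Nat.factorization_mul hℓ0 hq0] at hdvd
  simp only [Finsupp.coe_add, Pi.add_apply] at hdvd
  have h1 : q.factorization p ≤ 1 :=
    (Nat.squarefree_iff_factorization_le_one hq0).mp hq p
  have h2 : ℓ.factorization p ≤ (k - 1) * q.factorization p := by
    have := (Nat.factorization_le_iff_dvd hℓ0 (pow_ne_zero _ hq0)).mpr hℓ p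
    rwa [Nat.factorization_pow] at this
  have : ℓ.factorization p ≤ k - 1 := by nlinarith
  omega

lemma rad_mul_eq {q ℓ n : ℕ} (hn : n ≠ 0) (hq : Squarefree q) (hℓ : ℓ ∣ q ^ n) :
    rad (ℓ * q) = q := by
  unfold rad
  rw [primeFactors_mul_eq hq.ne_zero hn hℓ]
  exact Nat.prod_primeFactors_of_squarefree hq

lemma kfree_zero_false {k : ℕ} (h : KFree (k + 1) 0) : False :=
  h 2 Nat.prime_two (dvd_zero _)


theorem stmt15 (k : ℕ) (hk : 2 ≤ k) (x : ℝ) (hx : 0 < x) :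
    Z k x = ∑' q : ℕ,
      if Squarefree q ∧ 1 / x ≤ ((q : ℝ)) ^ k then
        (fk k q) ^ 2 * ∑ ℓ ∈ (q ^ (k - 1)).divisors, (phi2 ((ℓ : ℝ) * x) q : ℝ)
      else 0 := by
  have hk1 : k - 1 ≠ 0 := by omega
  have hk1' : k - 1 + 1 = k := by omega
  -- Step 1: drop the 1/x conditions
  set a : ℕ → ℝ := fun q => if KFree (k + 1) q then (phi2 x q : ℝ) * (fk k q) ^ 2 else 0 with ha
  set b : ℕ → ℝ := fun q =>
    if Squarefree q then
      (fk k q) ^ 2 * ∑ ℓ ∈ (q ^ (k - 1)).divisors, (phi2 ((ℓ : ℝ) * x) q : ℝ)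
    else 0 with hb
  have hL : Z k x = ∑' q, a q := by
    unfold Z
    apply tsum_congr
    intro q
    simp only [ha]
    by_cases h1 : KFree (k + 1) q
    · by_cases h2 : 1 / x ≤ (q : ℝ)
      · rw [if_pos ⟨h1, h2⟩, if_pos h1]
      · have hz : (q : ℝ) * x < 1 := by
          rw [not_le] at h2
          exact (lt_div_iff₀ hx).mp h2
        rw [if_neg (fun hc => h2 hc.2), if_pos h1, phi2_eq_zero hz]
        simp
    · simp [h1]
  have hR : (∑' q : ℕ, if Squarefree q ∧ 1 / x ≤ ((q : ℝ)) ^ k then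
        (fk k q) ^ 2 * ∑ ℓ ∈ (q ^ (k - 1)).divisors, (phi2 ((ℓ : ℝ) * x) q : ℝ)
      else 0) = ∑' q, b q := by
    apply tsum_congr
    intro q
    simp only [hb]
    by_cases h1 : Squarefree q
    · by_cases h2 : 1 / x ≤ (q : ℝ) ^ k
      · rw [if_pos ⟨h1, h2⟩, if_pos h1]
      · have hsum : ∀ ℓ ∈ (q ^ (k - 1)).divisors, (phi2 ((ℓ : ℝ) * x) q : ℝ) = 0 := by
          intro ℓ hℓ
          have hle : ℓ * q ≤ q ^ k := by
            have h3 : ℓ ≤ q ^ (k - 1) :=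
              Nat.le_of_dvd (Nat.pos_of_ne_zero (pow_ne_zero _ h1.ne_zero))
                (Nat.dvd_of_mem_divisors hℓ)
            calc ℓ * q ≤ q ^ (k - 1) * q := Nat.mul_le_mul_right q h3
              _ = q ^ k := by rw [← pow_succ, hk1']
          have hz : (q : ℝ) * ((ℓ : ℝ) * x) < 1 := by
            rw [not_le] at h2
            have hc : ((ℓ * q : ℕ) : ℝ) ≤ ((q ^ k : ℕ) : ℝ) := Nat.cast_le.mpr hle
            push_cast at hc
            have h4 : (q : ℝ) ^ k * x < 1 := (lt_div_iff₀ hx).mp h2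
            have h5 : (q : ℝ) * ((ℓ : ℝ) * x) = ((ℓ:ℝ) * (q:ℝ)) * x := by ring
            rw [h5]
            calc ((ℓ:ℝ) * (q:ℝ)) * x ≤ (q:ℝ)^k * x :=
                  mul_le_mul_of_nonneg_right hc hx.le
              _ < 1 := h4
          rw [phi2_eq_zero hz]; simp
        rw [if_neg (fun hc => h2 hc.2), if_pos h1, Finset.sum_eq_zero hsum, mul_zero]
    · simp [h1]
  rw [hL, hR]
  have hanon : ∀ q, 0 ≤ a q := by
    intro q; simp only [ha]
    split
    · exact mul_nonneg (Nat.cast_nonneg _) (sq_nonneg _)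
    · exact le_refl 0
  have hbnon : ∀ q, 0 ≤ b q := by
    intro q; simp only [hb]
    split
    · exact mul_nonneg (sq_nonneg _) (Finset.sum_nonneg fun ℓ _ => Nat.cast_nonneg _)
    · exact le_refl 0
  rw [tsum_toReal_ofReal hanon, tsum_toReal_ofReal hbnon]
  congr 1
  set G : ℕ × ℕ → ENNReal := fun p =>
    if Squarefree p.1 ∧ p.2 ∈ (p.1 ^ (k - 1)).divisors then
      ENNReal.ofReal ((fk k p.1) ^ 2 * (phi2 ((p.2 : ℝ) * x) p.1 : ℝ)) else 0 with hG
  have hBG : (∑' q, ENNReal.ofReal (b q)) = ∑' p : ℕ × ℕ, G p := by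
    rw [ENNReal.tsum_prod']
    apply tsum_congr
    intro q
    by_cases h1 : Squarefree q
    · have hfin : (∑' ℓ, G (q, ℓ)) = ∑ ℓ ∈ (q ^ (k - 1)).divisors, G (q, ℓ) := by
        apply tsum_eq_sum
        intro ℓ hℓ
        simp only [hG]
        rw [if_neg (fun hc => hℓ hc.2)]
      rw [hfin]
      simp only [hb, hG]
      rw [if_pos h1, Finset.mul_sum,
        ENNReal.ofReal_sum_of_nonneg
          (fun ℓ _ => mul_nonneg (sq_nonneg _) (Nat.cast_nonneg _))]
      apply Finset.sum_congr rfl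
      intro ℓ hℓ
      rw [if_pos ⟨h1, hℓ⟩]
    · have : ∀ ℓ : ℕ, G (q, ℓ) = 0 := by
        intro ℓ; simp only [hG]; rw [if_neg (fun hc => h1 hc.1)]
      simp only [hb, this, if_neg h1, tsum_zero, ENNReal.ofReal_zero]
  rw [hBG]
  -- the bijection q = ℓ * q̃
  have hcond : ∀ z : Function.support G,
      Squarefree z.1.1 ∧ z.1.2 ∈ (z.1.1 ^ (k - 1)).divisors := by
    rintro ⟨p, hp⟩
    by_contra hc
    apply hp
    simp only [hG]
    rw [if_neg hc]
  apply tsum_eq_tsum_of_ne_zero_bij (fun z => z.1.2 * z.1.1)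
  · -- injectivity
    rintro ⟨⟨q1, l1⟩, h1⟩ ⟨⟨q2, l2⟩, h2⟩ heq
    obtain ⟨hs1, hd1⟩ := hcond ⟨(q1, l1), h1⟩
    obtain ⟨hs2, hd2⟩ := hcond ⟨(q2, l2), h2⟩
    simp only at heq
    have hq : q1 = q2 := by
      have e1 : rad (l1 * q1) = q1 :=
        rad_mul_eq hk1 hs1 (Nat.dvd_of_mem_divisors hd1)
      have e2 : rad (l2 * q2) = q2 :=
        rad_mul_eq hk1 hs2 (Nat.dvd_of_mem_divisors hd2)
      rw [← e1, ← e2, heq]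
    subst hq
    have hl : l1 = l2 :=
      Nat.eq_of_mul_eq_mul_right (Nat.pos_of_ne_zero hs1.ne_zero) heq
    subst hl
    rfl
  · -- support F ⊆ range
    intro q hq
    have haq : a q ≠ 0 := by
      intro h0
      apply hq
      simp only [Function.mem_support, not_not] at *
      rw [h0, ENNReal.ofReal_zero]
    have hK : KFree (k + 1) q := by
      by_contra hc
      exact haq (by simp only [ha]; rw [if_neg hc])
    have hq0 : q ≠ 0 := by
      rintro rfl; exact kfree_zero_false hK
    set qt := rad q with hqt
    set ℓ := q / qt with hℓdef
    have hmul : ℓ * qt = q := Nat.div_mul_cancel (rad_dvd q)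
    have hldvd : ℓ ∣ qt ^ (k - 1) := by
      have h1 : ℓ * qt ∣ qt ^ (k - 1) * qt := by
        rw [hmul, ← pow_succ, hk1']
        exact dvd_rad_pow hq0 hK
      exact (Nat.mul_dvd_mul_iff_right (Nat.pos_of_ne_zero (rad_ne_zero q))).mp h1
    have hGval : G (qt, ℓ) = ENNReal.ofReal (a q) := by
      simp only [hG, ha]
      rw [if_pos ⟨rad_squarefree q,
        Nat.mem_divisors.mpr ⟨hldvd, pow_ne_zero _ (rad_ne_zero q)⟩⟩, if_pos hK]
      have e1 : fk k qt = fk k q := fk_congr (primeFactors_rad q)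
      have e2 : (phi2 ((ℓ : ℝ) * x) qt : ℝ) = (phi2 x q : ℝ) := by
        rw [← phi2_mul (rad_ne_zero q) hldvd, hmul]
      rw [e1, e2, mul_comm]
    refine ⟨⟨(qt, ℓ), ?_⟩, ?_⟩
    · rw [Function.mem_support, hGval]
      exact hq
    · exact hmul
  · -- value agreement
    rintro ⟨⟨q, ℓ⟩, hz⟩
    obtain ⟨hs, hd⟩ := hcond ⟨(q, ℓ), hz⟩
    have hdvd : ℓ ∣ q ^ (k - 1) := Nat.dvd_of_mem_divisors hd
    simp only [hG, ha]
    rw [if_pos (kfree_mul hk hs hdvd), if_pos ⟨hs, hd⟩]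
    have e1 : fk k (ℓ * q) = fk k q :=
      fk_congr (primeFactors_mul_eq hs.ne_zero hk1 hdvd)
    have e2 : (phi2 x (ℓ * q) : ℝ) = (phi2 ((ℓ : ℝ) * x) q : ℝ) := by
      rw [phi2_mul hs.ne_zero hdvd]
    rw [e1, e2, mul_comm]
end

section
/- Fix an integer k ≥ 2. With Z_k(x) := ∑_{q (k+1)-free, q ≥ 1/x} φ(x,q)·f_k(q)², one has limsup_{x→0⁺} log(Z_k(x))/log(x) ≤ 2 − 1/k. -/
open Finset Filter Asymptotics ArithmeticFunction Classical

lemma not_kfree_zero (k : ℕ) : ¬ KFree (k+1) 0 := fun h => h 2 Nat.prime_two (dvd_zero _)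

lemma kfree_ne_zero {k q : ℕ} (h : KFree (k+1) q) : q ≠ 0 := by
  rintro rfl; exact not_kfree_zero k h

lemma prime_pow_ge {p k : ℕ} (hp : p.Prime) (hk : 2 ≤ k) : (4:ℝ) ≤ (p:ℝ)^k := by
  calc (4:ℝ) = 2^2 := by norm_num
  _ ≤ (2:ℝ)^k := by exact pow_le_pow_right₀ (by norm_num) hk
  _ ≤ (p:ℝ)^k := by
    apply pow_le_pow_left₀ (by norm_num)
    exact_mod_cast hp.two_le

lemma factor_pos {p k : ℕ} (hp : p.Prime) (hk : 2 ≤ k) : (0:ℝ) < (p:ℝ)^k - 1 := by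
  have := prime_pow_ge hp hk; linarith

lemma factor_ge {p k : ℕ} (hp : p.Prime) (hk : 2 ≤ k) :
    (3/4) * (p:ℝ)^k ≤ (p:ℝ)^k - 1 := by
  have := prime_pow_ge hp hk; linarith

lemma fk_nonneg (k q : ℕ) (hk : 2 ≤ k) : 0 ≤ fk k q := by
  apply Finset.prod_nonneg
  intro p hp
  have hp' := Nat.prime_of_mem_primeFactors hp
  have := factor_pos hp' hk
  positivity

lemma fk_sq_le (k q : ℕ) (hk : 2 ≤ k) :
    fk k q ^ 2 ≤ ∏ p ∈ q.primeFactors, (16/9) / (p:ℝ)^(2*k) := by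
  rw [fk, ← Finset.prod_pow]
  apply Finset.prod_le_prod
  · intro p hp
    exact sq_nonneg _
  · intro p hp
    have hp' := Nat.prime_of_mem_primeFactors hp
    have h1 := factor_pos hp' hk
    have h2 := factor_ge hp' hk
    have hpk : (0:ℝ) < (p:ℝ)^k := pow_pos (by exact_mod_cast hp'.pos) k
    have : 1/((p:ℝ)^k - 1) ≤ (4/3) / (p:ℝ)^k := by
      rw [div_le_div_iff₀ (by linarith) hpk]
      linarith
    calc (1/((p:ℝ)^k - 1))^2 ≤ ((4/3) / (p:ℝ)^k)^2 := by
          apply pow_le_pow_left₀ (one_div_nonneg.mpr h1.le) this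
      _ = (16/9) / (p:ℝ)^(2*k) := by
          rw [div_pow, two_mul, pow_add, pow_two]
          ring

lemma q_le_rad_pow {k q : ℕ} (h : KFree (k+1) q) (hq : q ≠ 0) :
    q ≤ ∏ p ∈ q.primeFactors, p ^ k := by
  conv_lhs => rw [← Nat.factorization_prod_pow_eq_self hq]
  rw [Finsupp.prod, Nat.support_factorization]
  apply Finset.prod_le_prod'
  intro p hp
  have hp' := Nat.prime_of_mem_primeFactors hp
  have hle : q.factorization p ≤ k := by
    by_contra hgt
    push_neg at hgt
    exact h p hp' ((Nat.Prime.pow_dvd_iff_le_factorization hp' hq).mpr hgt)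
  exact Nat.pow_le_pow_right hp'.pos hle

lemma vle (k q : ℕ) (hk : 2 ≤ k) (h : KFree (k+1) q) :
    (q:ℝ) * fk k q ^ 2 ≤ ∏ p ∈ q.primeFactors, (16/9) / (p:ℝ)^k := by
  have hq := kfree_ne_zero h
  have h1 : (q:ℝ) ≤ ∏ p ∈ q.primeFactors, (p:ℝ)^k := by
    exact_mod_cast q_le_rad_pow h hq
  calc (q:ℝ) * fk k q ^2 ≤ (∏ p ∈ q.primeFactors, (p:ℝ)^k) * ∏ p ∈ q.primeFactors, (16/9)/(p:ℝ)^(2*k) := by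
        apply mul_le_mul h1 (fk_sq_le k q hk) (by positivity) (Finset.prod_nonneg (by intros; positivity))
    _ = ∏ p ∈ q.primeFactors, ((p:ℝ)^k * ((16/9)/(p:ℝ)^(2*k))) := (Finset.prod_mul_distrib).symm
    _ = ∏ p ∈ q.primeFactors, (16/9) / (p:ℝ)^k := by
        apply Finset.prod_congr rfl
        intro p hp
        have hp' : (0:ℝ) < (p:ℝ) := by exact_mod_cast (Nat.prime_of_mem_primeFactors hp).pos
        field_simp
        ring

lemma telescope (n : ℕ) :
    ∑ d ∈ Finset.Ico 3 (3+n), (1:ℝ)/(d*(d-1)) = 1/2 - 1/(n+2) := by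
  induction n with
  | zero => norm_num
  | succ n ih =>
    have h3 : 3 ≤ 3 + n := by omega
    rw [show 3 + (n+1) = (3+n) + 1 from rfl, Finset.sum_Ico_succ_top h3, ih]
    have h1 : ((n:ℝ)+2) ≠ 0 := by positivity
    have h2 : ((n:ℝ)+3) ≠ 0 := by positivity
    have key : (1:ℝ)/(((3+n:ℕ):ℝ)*(((3+n:ℕ):ℝ)-1)) = 1/((n:ℝ)+2) - 1/((n:ℝ)+3) := by
      push_cast
      rw [show ((3:ℝ)+(n:ℝ)) * ((3+(n:ℝ)) - 1) = ((n:ℝ)+2)*((n:ℝ)+3) from by ring,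
        div_sub_div _ _ h1 h2]
      norm_num
    rw [key]
    push_cast
    ring

lemma telescope_le (D : ℕ) : ∑ d ∈ Finset.Ico 3 D, (1:ℝ)/(d*(d-1)) ≤ 1/2 := by
  rcases le_or_gt 3 D with h | h
  · obtain ⟨n, rfl⟩ := Nat.exists_eq_add_of_le h
    rw [telescope]
    have : (0:ℝ) < (n:ℝ)+2 := by positivity
    have : 0 ≤ 1/((n:ℝ)+2) := by positivity
    linarith
  · rw [Finset.Ico_eq_empty (by omega)]
    simp

lemma prime_recip_sq_le (D : ℕ) :
    ∑ p ∈ (Finset.range D).filter Nat.Prime, (1:ℝ)/(p:ℝ)^2 ≤ 3/4 := by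
  have hsub : (Finset.range D).filter Nat.Prime ⊆ insert 2 (Finset.Ico 3 D) := by
    intro p hp
    rw [Finset.mem_filter, Finset.mem_range] at hp
    rcases eq_or_ne p 2 with rfl | hne
    · exact Finset.mem_insert_self _ _
    · apply Finset.mem_insert_of_mem
      rw [Finset.mem_Ico]
      have := hp.2.two_le
      omega
  calc ∑ p ∈ (Finset.range D).filter Nat.Prime, (1:ℝ)/(p:ℝ)^2
      ≤ ∑ p ∈ insert 2 (Finset.Ico 3 D), (1:ℝ)/(p:ℝ)^2 := by
        apply Finset.sum_le_sum_of_subset_of_nonneg hsub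
        intro i _ _; positivity
    _ = 1/4 + ∑ p ∈ Finset.Ico 3 D, (1:ℝ)/(p:ℝ)^2 := by
        rw [Finset.sum_insert (by simp [Finset.mem_Ico])]
        norm_num
    _ ≤ 1/4 + ∑ d ∈ Finset.Ico 3 D, (1:ℝ)/(d*(d-1)) := by
        apply add_le_add_right
        apply Finset.sum_le_sum
        intro d hd
        rw [Finset.mem_Ico] at hd
        have h3 : (3:ℝ) ≤ (d:ℝ) := by exact_mod_cast hd.1
        apply one_div_le_one_div_of_le (by nlinarith) (by nlinarith)
    _ ≤ 1/4 + 1/2 := by linarith [telescope_le D]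
    _ ≤ 3/4 := by norm_num

lemma fiber_card_le (k N : ℕ) (t : Finset ℕ) :
    ((((Finset.range N).filter (KFree (k+1))).filter
        (fun q => q.primeFactors = t)).card ≤ (k+1)^t.card) := by
  have : ((k+1):ℕ)^t.card = (t.pi (fun _ => Finset.range (k+1))).card := by
    rw [Finset.card_pi, Finset.prod_const, Finset.card_range]
  rw [this]
  apply Finset.card_le_card_of_injOn (fun q => fun p _ => q.factorization p)
  · intro q hq
    simp only [Finset.mem_coe, Finset.mem_filter, Finset.mem_range] at hq ⊢
    obtain ⟨⟨hqN, hqk⟩, hqt⟩ := hq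
    have hq0 : q ≠ 0 := kfree_ne_zero hqk
    rw [Finset.mem_pi]
    intro p hp
    rw [Finset.mem_range]
    by_contra hgt
    push_neg at hgt
    have hp' : p.Prime := Nat.prime_of_mem_primeFactors (hqt ▸ hp)
    exact hqk p hp' ((Nat.Prime.pow_dvd_iff_le_factorization hp' hq0).mpr hgt)
  · intro q hq q' hq' heq
    simp only [Finset.mem_coe, Finset.mem_filter, Finset.mem_range] at hq hq'
    have hq0 : q ≠ 0 := kfree_ne_zero hq.1.2
    have hq0' : q' ≠ 0 := kfree_ne_zero hq'.1.2
    have hfact : ∀ p ∈ t, q.factorization p = q'.factorization p := by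
      intro p hp
      exact congrFun (congrFun heq p) hp
    rw [← Nat.factorization_prod_pow_eq_self hq0, ← Nat.factorization_prod_pow_eq_self hq0']
    rw [Finsupp.prod, Finsupp.prod, Nat.support_factorization, Nat.support_factorization,
      hq.2, hq'.2]
    exact Finset.prod_congr rfl (fun p hp => by rw [hfact p hp])

noncomputable def vterm (k q : ℕ) : ℝ := if KFree (k+1) q then (q:ℝ) * fk k q ^ 2 else 0

lemma vterm_nonneg (k : ℕ) (hk : 2 ≤ k) (q : ℕ) : 0 ≤ vterm k q := by
  unfold vterm
  split
  · have := fk_nonneg k q hk; positivity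
  · exact le_refl _

lemma sum_vterm_le (k : ℕ) (hk : 2 ≤ k) (N : ℕ) :
    ∑ q ∈ Finset.range N, vterm k q ≤ Real.exp (2*k+2) := by
  classical
  set P := (Finset.range N).filter Nat.Prime with hP
  set A := (Finset.range N).filter (KFree (k+1)) with hA
  set H : ℕ → ℝ := fun p => (16/9) / (p:ℝ)^k with hH
  have hHnn : ∀ p : ℕ, 0 ≤ H p := by intro p; rw [hH]; positivity
  have step1 : ∑ q ∈ Finset.range N, vterm k q = ∑ q ∈ A, (q:ℝ) * fk k q ^ 2 := by
    rw [hA, Finset.sum_filter]; rfl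
  have step2 : ∑ q ∈ A, (q:ℝ) * fk k q ^ 2 ≤ ∑ q ∈ A, ∏ p ∈ q.primeFactors, H p := by
    apply Finset.sum_le_sum
    intro q hq
    rw [hA, Finset.mem_filter] at hq
    exact vle k q hk hq.2
  have hmaps : ∀ q ∈ A, q.primeFactors ∈ P.powerset := by
    intro q hq
    rw [hA, Finset.mem_filter, Finset.mem_range] at hq
    rw [Finset.mem_powerset]
    intro p hp
    rw [hP, Finset.mem_filter, Finset.mem_range]
    have hp' := Nat.prime_of_mem_primeFactors hp
    have hdvd := Nat.dvd_of_mem_primeFactors hp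
    have hq0 : q ≠ 0 := kfree_ne_zero hq.2
    exact ⟨lt_of_le_of_lt (Nat.le_of_dvd (Nat.pos_of_ne_zero hq0) hdvd) hq.1, hp'⟩
  have step3 : ∑ q ∈ A, ∏ p ∈ q.primeFactors, H p
      = ∑ t ∈ P.powerset, ∑ q ∈ A.filter (fun q => q.primeFactors = t), ∏ p ∈ q.primeFactors, H p :=
    (Finset.sum_fiberwise_of_maps_to hmaps _).symm
  have step4 : ∀ t ∈ P.powerset, ∑ q ∈ A.filter (fun q => q.primeFactors = t), ∏ p ∈ q.primeFactors, H p
      ≤ ((k+1):ℝ)^t.card * ∏ p ∈ t, H p := by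
    intro t _
    have : ∀ q ∈ A.filter (fun q => q.primeFactors = t), ∏ p ∈ q.primeFactors, H p = ∏ p ∈ t, H p := by
      intro q hq
      rw [Finset.mem_filter] at hq
      rw [hq.2]
    rw [Finset.sum_congr rfl this, Finset.sum_const, nsmul_eq_mul]
    apply mul_le_mul_of_nonneg_right _ (Finset.prod_nonneg fun p _ => hHnn p)
    have := fiber_card_le k N t
    calc ((A.filter (fun q => q.primeFactors = t)).card : ℝ) ≤ ((k+1)^t.card : ℕ) := by exact_mod_cast this
      _ = ((k+1):ℝ)^t.card := by push_cast; ring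
  have step5 : ∑ t ∈ P.powerset, ((k+1):ℝ)^t.card * ∏ p ∈ t, H p
      = ∏ p ∈ P, (1 + ((k+1):ℝ) * H p) := by
    have : ∀ t ∈ P.powerset, ((k+1):ℝ)^t.card * ∏ p ∈ t, H p = ∏ p ∈ t, (((k+1):ℝ) * H p) := by
      intro t _
      rw [Finset.prod_mul_distrib, Finset.prod_const]
    rw [Finset.sum_congr rfl this]
    calc ∑ t ∈ P.powerset, ∏ p ∈ t, (((k+1):ℝ) * H p)
        = ∏ p ∈ P, (((k+1):ℝ) * H p + 1) := by
          rw [Finset.prod_add]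
          simp
      _ = ∏ p ∈ P, (1 + ((k+1):ℝ) * H p) := by
          apply Finset.prod_congr rfl
          intros; ring
  have step6 : ∏ p ∈ P, (1 + ((k+1):ℝ) * H p) ≤ Real.exp (∑ p ∈ P, ((k+1):ℝ) * H p) := by
    rw [Real.exp_sum]
    apply Finset.prod_le_prod
    · intro p _; have := hHnn p; positivity
    · intro p _
      have := Real.add_one_le_exp (((k+1):ℝ) * H p)
      linarith
  have step7 : ∑ p ∈ P, ((k+1):ℝ) * H p ≤ 2*k+2 := by
    have hsum : ∑ p ∈ P, H p ≤ 4/3 := by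
      have hle : ∀ p ∈ P, H p ≤ (16/9) * (1/(p:ℝ)^2) := by
        intro p hp
        rw [hP, Finset.mem_filter] at hp
        have hp2 : (1:ℕ) ≤ p := hp.2.one_lt.le
        have : (p:ℝ)^2 ≤ (p:ℝ)^k := by
          apply pow_le_pow_right₀ (by exact_mod_cast hp2) hk
        have hp0 : (0:ℝ) < (p:ℝ) := by exact_mod_cast hp.2.pos
        rw [hH, div_eq_mul_one_div]
        apply mul_le_mul_of_nonneg_left _ (by norm_num)
        rw [← one_div]
        exact one_div_le_one_div_of_le (pow_pos hp0 2) this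
      calc ∑ p ∈ P, H p ≤ ∑ p ∈ P, (16/9) * (1/(p:ℝ)^2) := Finset.sum_le_sum hle
        _ = (16/9) * ∑ p ∈ P, (1/(p:ℝ)^2) := by rw [Finset.mul_sum]
        _ ≤ (16/9) * (3/4) := by
            apply mul_le_mul_of_nonneg_left (prime_recip_sq_le N) (by norm_num)
        _ = 4/3 := by norm_num
    have hnn : 0 ≤ ∑ p ∈ P, H p := Finset.sum_nonneg (fun p _ => hHnn p)
    calc ∑ p ∈ P, ((k+1):ℝ) * H p = ((k+1):ℝ) * ∑ p ∈ P, H p := by rw [Finset.mul_sum]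
      _ ≤ ((k+1):ℝ) * (4/3) := by
          apply mul_le_mul_of_nonneg_left hsum (by positivity)
      _ ≤ 2*k+2 := by nlinarith [show (0:ℝ) ≤ (k:ℝ) from Nat.cast_nonneg k]
  calc ∑ q ∈ Finset.range N, vterm k q
      = ∑ q ∈ A, (q:ℝ) * fk k q ^ 2 := step1
    _ ≤ ∑ q ∈ A, ∏ p ∈ q.primeFactors, H p := step2
    _ = ∑ t ∈ P.powerset, ∑ q ∈ A.filter (fun q => q.primeFactors = t), ∏ p ∈ q.primeFactors, H p := step3
    _ ≤ ∑ t ∈ P.powerset, ((k+1):ℝ)^t.card * ∏ p ∈ t, H p := Finset.sum_le_sum step4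
    _ = ∏ p ∈ P, (1 + ((k+1):ℝ) * H p) := step5
    _ ≤ Real.exp (∑ p ∈ P, ((k+1):ℝ) * H p) := step6
    _ ≤ Real.exp (2*k+2) := Real.exp_le_exp.mpr step7

lemma summable_vterm (k : ℕ) (hk : 2 ≤ k) : Summable (vterm k) :=
  summable_of_sum_range_le (vterm_nonneg k hk) (sum_vterm_le k hk)

lemma tsum_vterm_le (k : ℕ) (hk : 2 ≤ k) : ∑' q, vterm k q ≤ Real.exp (2*k+2) :=
  Real.tsum_le_of_sum_range_le (vterm_nonneg k hk) (sum_vterm_le k hk)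


lemma nat_two_div (y n : ℕ) (hn : 0 < n) : (2*y)/n ≤ 2*(y/n) + 1 := by
  have h1 : y % n < n := Nat.mod_lt y hn
  have h2 : n * (y/n) + y % n = y := Nat.div_add_mod y n
  have : (2*y) / n < 2*(y/n) + 2 := by
    rw [Nat.div_lt_iff_lt_mul hn]
    nlinarith
  omega

lemma card_dvd_Ioc (n y : ℕ) (hn : 0 < n) :
    (((Finset.Ioc y (2*y)).filter (fun m => n ∣ m)).card : ℕ) ≤ y/n + 1 := by
  have hdisj : Disjoint ((Finset.Ioc 0 y).filter (fun m => n ∣ m))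
      ((Finset.Ioc y (2*y)).filter (fun m => n ∣ m)) := by
    apply Finset.disjoint_filter_filter
    rw [Finset.disjoint_left]
    intro m hm hm'
    rw [Finset.mem_Ioc] at hm hm'
    omega
  have hunion : ((Finset.Ioc 0 y).filter (fun m => n ∣ m)) ∪ ((Finset.Ioc y (2*y)).filter (fun m => n ∣ m))
      = (Finset.Ioc 0 (2*y)).filter (fun m => n ∣ m) := by
    rw [← Finset.filter_union, Finset.Ioc_union_Ioc_eq_Ioc (Nat.zero_le y) (by omega)]
  have hcard := Finset.card_union_of_disjoint hdisj
  rw [hunion] at hcard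
  have e1 : ((Finset.Ioc 0 y).filter (fun m => n ∣ m)).card = y / n := by
    simpa using Nat.Ioc_filter_dvd_card_eq_div y n
  have e2 : ((Finset.Ioc 0 (2*y)).filter (fun m => n ∣ m)).card = (2*y) / n := by
    simpa using Nat.Ioc_filter_dvd_card_eq_div (2*y) n
  have := nat_two_div y n hn
  omega

lemma sf_count (y : ℕ) (hy : 1000 ≤ y) :
    (y:ℝ)/8 ≤ (((Finset.Ioc y (2*y)).filter Squarefree).card : ℝ) := by
  classical
  set D := Nat.sqrt (2*y) + 1 with hD
  set P' := (Finset.range D).filter Nat.Prime with hP'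
  set T := (Finset.Ioc y (2*y)).filter (fun m => ¬ Squarefree m) with hT
  have hsub : T ⊆ P'.biUnion (fun p => (Finset.Ioc y (2*y)).filter (fun m => p*p ∣ m)) := by
    intro m hm
    rw [hT, Finset.mem_filter] at hm
    obtain ⟨hmIoc, hnsq⟩ := hm
    rw [Nat.squarefree_iff_prime_squarefree] at hnsq
    push_neg at hnsq
    obtain ⟨p, hp, hdvd⟩ := hnsq
    have hp' : p.Prime := hp
    rw [Finset.mem_Ioc] at hmIoc
    have hm0 : 0 < m := lt_of_le_of_lt (Nat.zero_le y) hmIoc.1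
    have hpp : p * p ≤ 2*y := le_trans (Nat.le_of_dvd hm0 hdvd) hmIoc.2
    have hpD : p < D := by
      rw [hD]
      have := Nat.le_sqrt'.mpr (show p^2 ≤ 2*y by rwa [pow_two])
      omega
    rw [Finset.mem_biUnion]
    refine ⟨p, ?_, ?_⟩
    · rw [hP', Finset.mem_filter, Finset.mem_range]; exact ⟨hpD, hp'⟩
    · rw [Finset.mem_filter, Finset.mem_Ioc]; exact ⟨hmIoc, hdvd⟩
  have hTcard : (T.card : ℝ) ≤ (3/4) * y + D := by
    have h1 : T.card ≤ ∑ p ∈ P', (((Finset.Ioc y (2*y)).filter (fun m => p*p ∣ m)).card) :=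
      le_trans (Finset.card_le_card hsub) (Finset.card_biUnion_le)
    have h2 : ∀ p ∈ P', (((Finset.Ioc y (2*y)).filter (fun m => p*p ∣ m)).card : ℝ)
        ≤ (y:ℝ)/(p:ℝ)^2 + 1 := by
      intro p hp
      rw [hP', Finset.mem_filter] at hp
      have hp0 : 0 < p := hp.2.pos
      have := card_dvd_Ioc (p*p) y (by positivity)
      calc (((Finset.Ioc y (2*y)).filter (fun m => p*p ∣ m)).card : ℝ)
          ≤ ((y/(p*p) + 1 : ℕ) : ℝ) := by exact_mod_cast this
        _ ≤ (y:ℝ)/(p:ℝ)^2 + 1 := by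
            push_cast
            have := Nat.cast_div_le (α := ℝ) (m := y) (n := p*p)
            rw [pow_two]
            push_cast at this
            linarith
    calc (T.card : ℝ) ≤ ∑ p ∈ P', (((Finset.Ioc y (2*y)).filter (fun m => p*p ∣ m)).card : ℝ) := by
          exact_mod_cast h1
      _ ≤ ∑ p ∈ P', ((y:ℝ)/(p:ℝ)^2 + 1) := Finset.sum_le_sum h2
      _ = (y:ℝ) * (∑ p ∈ P', 1/(p:ℝ)^2) + P'.card := by
          rw [Finset.sum_add_distrib, Finset.mul_sum, Finset.sum_const, nsmul_eq_mul]
          simp only [mul_one]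
          congr 1
          apply Finset.sum_congr rfl
          intros; field_simp
      _ ≤ (y:ℝ) * (3/4) + D := by
          apply add_le_add
          · apply mul_le_mul_of_nonneg_left (prime_recip_sq_le D) (by positivity)
          · have : P'.card ≤ D := by
              rw [hP']
              exact le_trans (Finset.card_filter_le _ _) (by simp)
            exact_mod_cast this
      _ = (3/4) * y + D := by ring
  have hDle : (D:ℝ) ≤ (y:ℝ)/8 := by
    have hy' : (1000:ℝ) ≤ (y:ℝ) := by exact_mod_cast hy
    have hs : ((Nat.sqrt (2*y) : ℕ) : ℝ) ≤ Real.sqrt (2*(y:ℝ)) := by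
      calc ((Nat.sqrt (2*y) : ℕ) : ℝ) = Real.sqrt (((Nat.sqrt (2*y) : ℕ) : ℝ)^2) :=
            (Real.sqrt_sq (by positivity)).symm
        _ ≤ Real.sqrt (2*(y:ℝ)) := by
            apply Real.sqrt_le_sqrt
            have := Nat.sqrt_le' (2*y)
            exact_mod_cast this
    have hs2 : Real.sqrt (2*(y:ℝ)) ≤ (y:ℝ)/16 := by
      have h2y : 2*(y:ℝ) ≤ ((y:ℝ)/16)^2 := by nlinarith
      calc Real.sqrt (2*(y:ℝ)) ≤ Real.sqrt (((y:ℝ)/16)^2) := Real.sqrt_le_sqrt h2y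
        _ = (y:ℝ)/16 := Real.sqrt_sq (by positivity)
    have : (D:ℝ) = ((Nat.sqrt (2*y) : ℕ) : ℝ) + 1 := by rw [hD]; push_cast; ring
    rw [this]
    push_cast at hs
    nlinarith [hs, hs2, hy']
  have hpart : ((Finset.Ioc y (2*y)).filter Squarefree).card + T.card = y := by
    rw [hT]
    rw [Finset.card_filter_add_card_filter_not]
    rw [Nat.card_Ioc]
    omega
  have hy' : (1000:ℝ) ≤ (y:ℝ) := by exact_mod_cast hy
  have hcast : ((((Finset.Ioc y (2*y)).filter Squarefree).card + T.card : ℕ) : ℝ) = (y:ℝ) := by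
    exact_mod_cast congrArg (fun n : ℕ => (n:ℝ)) hpart
  push_cast at hcast
  linarith

noncomputable def uterm (k : ℕ) (x : ℝ) (q : ℕ) : ℝ :=
  if KFree (k + 1) q ∧ 1 / x ≤ (q : ℝ) then (phi2 x q : ℝ) * (fk k q) ^ 2 else 0

lemma Z_eq (k : ℕ) (x : ℝ) : Z k x = ∑' q, uterm k x q := rfl

lemma uterm_nonneg (k : ℕ) (x : ℝ) (q : ℕ) : 0 ≤ uterm k x q := by
  unfold uterm
  split
  · exact mul_nonneg (Nat.cast_nonneg _) (sq_nonneg _)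
  · exact le_refl _

lemma phi2_le (x : ℝ) (hx : 0 ≤ x) (q : ℕ) : (phi2 x q : ℝ) ≤ (q:ℝ) * x := by
  have h1 : phi2 x q ≤ ⌊(q : ℝ) * x⌋₊ := by
    unfold phi2
    calc ((Finset.Icc 1 ⌊(q : ℝ) * x⌋₊).filter fun m => Nat.gcd m q = 1).card
        ≤ (Finset.Icc 1 ⌊(q : ℝ) * x⌋₊).card := Finset.card_filter_le _ _
      _ = ⌊(q : ℝ) * x⌋₊ := by rw [Nat.card_Icc]; omega
  calc (phi2 x q : ℝ) ≤ (⌊(q : ℝ) * x⌋₊ : ℝ) := by exact_mod_cast h1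
    _ ≤ (q:ℝ) * x := Nat.floor_le (by positivity)

lemma uterm_le (k : ℕ) (hk : 2 ≤ k) (x : ℝ) (hx : 0 ≤ x) (q : ℕ) :
    uterm k x q ≤ x * vterm k q := by
  unfold uterm vterm
  by_cases h : KFree (k + 1) q ∧ 1 / x ≤ (q : ℝ)
  · rw [if_pos h, if_pos h.1]
    calc (phi2 x q : ℝ) * fk k q ^ 2 ≤ ((q:ℝ) * x) * fk k q ^ 2 :=
          mul_le_mul_of_nonneg_right (phi2_le x hx q) (sq_nonneg _)
      _ = x * ((q:ℝ) * fk k q ^ 2) := by ring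
  · rw [if_neg h]
    split
    · exact mul_nonneg hx (mul_nonneg (Nat.cast_nonneg _) (sq_nonneg _))
    · simp

lemma summable_uterm (k : ℕ) (hk : 2 ≤ k) (x : ℝ) (hx : 0 ≤ x) :
    Summable (uterm k x) :=
  Summable.of_nonneg_of_le (uterm_nonneg k x) (uterm_le k hk x hx)
    ((summable_vterm k hk).mul_left x)

lemma Z_le (k : ℕ) (hk : 2 ≤ k) (x : ℝ) (hx : 0 ≤ x) :
    Z k x ≤ x * Real.exp (2*k+2) := by
  rw [Z_eq]
  calc ∑' q, uterm k x q ≤ ∑' q, x * vterm k q :=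
        Summable.tsum_le_tsum (uterm_le k hk x hx) (summable_uterm k hk x hx)
          ((summable_vterm k hk).mul_left x)
    _ = x * ∑' q, vterm k q := tsum_mul_left
    _ ≤ x * Real.exp (2*k+2) := mul_le_mul_of_nonneg_left (tsum_vterm_le k hk) hx

lemma kfree_pow_of_squarefree {k m : ℕ} (hk : 1 ≤ k) (hm : Squarefree m) :
    KFree (k+1) (m^k) := by
  intro p hp hdvd
  have hm0 : m ≠ 0 := hm.ne_zero
  have hmk0 : m^k ≠ 0 := pow_ne_zero _ hm0
  rw [Nat.Prime.pow_dvd_iff_le_factorization hp hmk0, Nat.factorization_pow] at hdvd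
  have h1 : m.factorization p ≤ 1 := Squarefree.natFactorization_le_one p hm
  simp only [Finsupp.smul_apply, smul_eq_mul] at hdvd
  nlinarith

lemma fk_pow_ge (k m : ℕ) (hk : 2 ≤ k) (hm : m ≠ 0) :
    1/(m:ℝ)^k ≤ fk k (m^k) := by
  have hkk : k ≠ 0 := by omega
  have hpf : (m^k).primeFactors = m.primeFactors := Nat.primeFactors_pow m hkk
  rw [fk, hpf]
  have hrad : (∏ p ∈ m.primeFactors, p) ∣ m := Nat.prod_primeFactors_dvd m
  have hradle : (∏ p ∈ m.primeFactors, p) ≤ m := Nat.le_of_dvd (Nat.pos_of_ne_zero hm) hrad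
  have hradpos : 0 < ∏ p ∈ m.primeFactors, p :=
    Finset.prod_pos (fun p hp => (Nat.prime_of_mem_primeFactors hp).pos)
  calc 1/(m:ℝ)^k ≤ 1/((∏ p ∈ m.primeFactors, p : ℕ):ℝ)^k := by
        apply one_div_le_one_div_of_le
        · have : (0:ℝ) < ((∏ p ∈ m.primeFactors, p : ℕ):ℝ) := by exact_mod_cast hradpos
          positivity
        · have : ((∏ p ∈ m.primeFactors, p : ℕ):ℝ) ≤ (m:ℝ) := by exact_mod_cast hradle
          apply pow_le_pow_left₀ (by positivity) this
    _ = ∏ p ∈ m.primeFactors, 1/(p:ℝ)^k := by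
        rw [Nat.cast_prod, ← Finset.prod_pow]
        simp only [one_div]
        rw [Finset.prod_inv_distrib]
    _ ≤ ∏ p ∈ m.primeFactors, 1/((p:ℝ)^k - 1) := by
        apply Finset.prod_le_prod
        · intro p hp
          have : (0:ℝ) < (p:ℝ) := by exact_mod_cast (Nat.prime_of_mem_primeFactors hp).pos
          positivity
        · intro p hp
          have hp' := Nat.prime_of_mem_primeFactors hp
          have h1 := factor_pos hp' hk
          have : (0:ℝ) < (p:ℝ)^k := pow_pos (by exact_mod_cast hp'.pos) k
          apply one_div_le_one_div_of_le h1
          linarith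

lemma phi2_ge_one {x : ℝ} {q : ℕ} (h1 : 1 ≤ (q:ℝ) * x) : 1 ≤ phi2 x q := by
  unfold phi2
  rw [Nat.succ_le_iff, Finset.card_pos]
  refine ⟨1, ?_⟩
  rw [Finset.mem_filter, Finset.mem_Icc]
  refine ⟨⟨le_refl 1, ?_⟩, Nat.gcd_one_left q⟩
  exact Nat.le_floor (by exact_mod_cast h1)

lemma Z_lower (k : ℕ) (hk : 2 ≤ k) (x : ℝ) (hx : 0 < x) (hxs : x ≤ ((1:ℝ)/1000)^k) :
    ((1:ℝ)/4)^(2*k)/8 * x^((2:ℝ) - 1/(k:ℝ)) ≤ Z k x := by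
  have hk0 : (k:ℝ) ≠ 0 := by positivity
  set t : ℝ := (1/x)^((k:ℝ)⁻¹) with htdef
  have h1x : (0:ℝ) < 1/x := by positivity
  have htpos : 0 < t := Real.rpow_pos_of_pos h1x _
  have ht_pow : t^(k:ℕ) = 1/x := by
    rw [htdef, ← Real.rpow_natCast ((1/x)^((k:ℝ)⁻¹)) k, ← Real.rpow_mul h1x.le,
      inv_mul_cancel₀ hk0, Real.rpow_one]
  have h1000 : (1000:ℝ)^(k:ℕ) ≤ 1/x := by
    have h := one_div_le_one_div_of_le hx hxs
    rwa [one_div_pow, one_div_one_div] at h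
  have ht1000 : (1000:ℝ) ≤ t := by
    have h2 : ((1000:ℝ)^(k:ℕ))^((k:ℝ)⁻¹) ≤ t := by
      rw [htdef]
      exact Real.rpow_le_rpow (by positivity) h1000 (by positivity)
    rwa [← Real.rpow_natCast (1000:ℝ) k, ← Real.rpow_mul (by norm_num),
      mul_inv_cancel₀ hk0, Real.rpow_one] at h2
  set y : ℕ := ⌊t⌋₊ + 1 with hydef
  have hy1000 : 1000 ≤ y := by
    have : (1000:ℕ) ≤ ⌊t⌋₊ := Nat.le_floor (by exact_mod_cast ht1000)
    omega
  have hty : t < (y:ℝ) := by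
    rw [hydef]; push_cast; exact Nat.lt_floor_add_one t
  have hyt : (y:ℝ) ≤ 2*t := by
    rw [hydef]; push_cast
    have := Nat.floor_le (le_of_lt (lt_of_lt_of_le (by norm_num) ht1000) : (0:ℝ) ≤ t)
    linarith
  set S := (Finset.Ioc y (2*y)).filter Squarefree with hS
  have hScard : (y:ℝ)/8 ≤ S.card := sf_count y hy1000
  -- per-element bound
  have hterm : ∀ m ∈ S, (1/((4*t)^k))^2 ≤ uterm k x (m^k) := by
    intro m hm
    rw [hS, Finset.mem_filter, Finset.mem_Ioc] at hm
    obtain ⟨⟨hmy, hm2y⟩, hmsf⟩ := hm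
    have hm0 : m ≠ 0 := by omega
    have hmt : t < (m:ℝ) := lt_trans hty (by exact_mod_cast hmy)
    have hm4t : (m:ℝ) ≤ 4*t := by
      have : (m:ℝ) ≤ 2*(y:ℝ) := by exact_mod_cast hm2y
      linarith
    have hcond2 : 1/x ≤ ((m^k : ℕ):ℝ) := by
      push_cast
      calc 1/x = t^(k:ℕ) := ht_pow.symm
        _ ≤ (m:ℝ)^(k:ℕ) := pow_le_pow_left₀ htpos.le hmt.le k
    have hkf : KFree (k+1) (m^k) := kfree_pow_of_squarefree (by omega) hmsf
    have hphi : 1 ≤ phi2 x (m^k) := by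
      apply phi2_ge_one
      calc (1:ℝ) = (1/x) * x := by field_simp
        _ ≤ ((m^k : ℕ):ℝ) * x := mul_le_mul_of_nonneg_right hcond2 hx.le
    have hfk : 1/(m:ℝ)^k ≤ fk k (m^k) := fk_pow_ge k m hk hm0
    have hmpos : (0:ℝ) < (m:ℝ) := by exact_mod_cast Nat.pos_of_ne_zero hm0
    have h4t : 1/((4*t)^k) ≤ 1/(m:ℝ)^k := by
      apply one_div_le_one_div_of_le (by positivity)
      exact pow_le_pow_left₀ hmpos.le hm4t k
    unfold uterm
    rw [if_pos ⟨hkf, hcond2⟩]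
    calc (1/((4*t)^k))^2 ≤ (1/(m:ℝ)^k)^2 := pow_le_pow_left₀ (by positivity) h4t 2
      _ ≤ fk k (m^k) ^ 2 := pow_le_pow_left₀ (by positivity) hfk 2
      _ ≤ (phi2 x (m^k) : ℝ) * fk k (m^k) ^ 2 := by
          apply le_mul_of_one_le_left (sq_nonneg _)
          exact_mod_cast hphi
  -- sum over the image
  set F := S.image (fun m => m^k) with hF
  have hinj : Set.InjOn (fun m : ℕ => m^k) S := fun a _ b _ h =>
    Nat.pow_left_injective (by omega) h
  have hsum : ∑ q ∈ F, uterm k x q = ∑ m ∈ S, uterm k x (m^k) := Finset.sum_image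
    (fun a ha b hb h => hinj ha hb h)
  have hZge : ∑ q ∈ F, uterm k x q ≤ Z k x := by
    rw [Z_eq]
    exact Summable.sum_le_tsum F (fun q _ => uterm_nonneg k x q) (summable_uterm k hk x hx.le)
  have hsum_ge : (S.card : ℝ) * (1/((4*t)^k))^2 ≤ ∑ m ∈ S, uterm k x (m^k) := by
    calc (S.card : ℝ) * (1/((4*t)^k))^2 = ∑ _m ∈ S, (1/((4*t)^k))^2 := by
          rw [Finset.sum_const, nsmul_eq_mul]
      _ ≤ ∑ m ∈ S, uterm k x (m^k) := Finset.sum_le_sum hterm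
  have hcard_t : t/8 ≤ (S.card : ℝ) := by
    have : t/8 ≤ (y:ℝ)/8 := by linarith
    linarith
  have hfinal : t/8 * (1/((4*t)^k))^2 ≤ Z k x := by
    have h1 : t/8 * (1/((4*t)^k))^2 ≤ (S.card : ℝ) * (1/((4*t)^k))^2 :=
      mul_le_mul_of_nonneg_right hcard_t (by positivity)
    linarith [hsum_ge, hZge, hsum ▸ hsum_ge]
  -- algebra
  have halg : ((1:ℝ)/4)^(2*k)/8 * x^((2:ℝ) - 1/(k:ℝ)) = t/8 * (1/((4*t)^k))^2 := by
    have hxr : x^((2:ℝ) - 1/(k:ℝ)) = t * x^(2:ℕ) := by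
      have h1 : t = x^(-(1/(k:ℝ)) : ℝ) := by
        rw [htdef, one_div, Real.inv_rpow hx.le, ← Real.rpow_neg hx.le, one_div]
      rw [h1, ← Real.rpow_natCast x 2, ← Real.rpow_add hx]
      norm_num
      ring_nf
    rw [hxr, mul_pow 4 t k, ht_pow]
    rw [show (4:ℝ)^k * (1/x) = 4^k/x from by ring, one_div_div,
      show ((1:ℝ)/4)^(2*k) = 1/4^(2*k) from one_div_pow 4 (2*k),
      div_pow, ← pow_mul, show k*2 = 2*k from by ring]
    ring
  rw [halg]
  exact hfinal


theorem stmt16 (k : ℕ) (hk : 2 ≤ k) :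
    Filter.limsup (fun x : ℝ => Real.log (Z k x) / Real.log x) (nhdsWithin 0 (Set.Ioi 0))
      ≤ 2 - 1 / (k : ℝ) := by
  set L : Filter ℝ := nhdsWithin 0 (Set.Ioi 0) with hL
  have hLne : L.NeBot := nhdsGT_neBot (0:ℝ)
  set c : ℝ := ((1:ℝ)/4)^(2*k)/8 with hc
  have hcpos : 0 < c := by rw [hc]; positivity
  set B : ℝ := Real.exp (2*k+2) with hB
  have hBpos : 0 < B := Real.exp_pos _
  set δ : ℝ := min (((1:ℝ)/1000)^k) (1/(2*B)) with hδ
  have hδpos : 0 < δ := lt_min (by positivity) (by positivity)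
  have hev : ∀ᶠ x in L, x ∈ Set.Ioo (0:ℝ) δ := by
    rw [hL]
    exact Ioo_mem_nhdsGT_of_mem ⟨le_refl 0, hδpos⟩
  -- basic consequences for small x
  have hbasic : ∀ x ∈ Set.Ioo (0:ℝ) δ,
      0 < Z k x ∧ Real.log (Z k x) ≤ 0 ∧ Real.log x < 0 ∧
        Real.log c + (2 - 1/(k:ℝ)) * Real.log x ≤ Real.log (Z k x) := by
    intro x hx
    obtain ⟨hx0, hxδ⟩ := hx
    have hxs : x ≤ ((1:ℝ)/1000)^k := le_of_lt (lt_of_lt_of_le hxδ (min_le_left _ _))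
    have hxB : x < 1/(2*B) := lt_of_lt_of_le hxδ (min_le_right _ _)
    have hx1 : x < 1 := by
      have h1 : 1/(2*B) ≤ 1 := by
        rw [div_le_one (by positivity)]
        have : (1:ℝ) ≤ B := Real.one_le_exp (by positivity)
        linarith
      linarith
    have hZlow := Z_lower k hk x hx0 hxs
    have hrpos : 0 < c * x^((2:ℝ) - 1/(k:ℝ)) :=
      mul_pos hcpos (Real.rpow_pos_of_pos hx0 _)
    have hZpos : 0 < Z k x := lt_of_lt_of_le hrpos hZlow
    have hZhi : Z k x ≤ x * B := Z_le k hk x hx0.le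
    have hZ1 : Z k x ≤ 1 := by
      have : x * B ≤ 1 := by
        rw [← le_div_iff₀ hBpos] at *
        have : (1:ℝ)/(2*B) ≤ 1/B := by
          apply div_le_div_of_nonneg_left one_pos.le hBpos
          linarith
        linarith [hxB.le.trans this]
      linarith
    refine ⟨hZpos, Real.log_nonpos hZpos.le hZ1, Real.log_neg hx0 hx1, ?_⟩
    calc Real.log c + (2 - 1/(k:ℝ)) * Real.log x
        = Real.log (c * x^((2:ℝ) - 1/(k:ℝ))) := by
          rw [Real.log_mul hcpos.ne' (Real.rpow_pos_of_pos hx0 _).ne', Real.log_rpow hx0]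
      _ ≤ Real.log (Z k x) := Real.log_le_log hrpos hZlow
  -- coboundedness
  have hco : IsCoboundedUnder (· ≤ ·) L (fun x : ℝ => Real.log (Z k x) / Real.log x) := by
    apply isCoboundedUnder_le_of_eventually_le L (x := 0)
    filter_upwards [hev] with x hx
    obtain ⟨hZpos, hlogZ, hlogx, _⟩ := hbasic x hx
    exact div_nonneg_iff.mpr (Or.inr ⟨hlogZ, hlogx.le⟩)
  -- tendsto of error term
  have htend : Tendsto (fun x : ℝ => Real.log c / Real.log x) L (nhds 0) := by
    have h1 : Tendsto (fun x : ℝ => -Real.log x) L atTop :=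
      tendsto_neg_atBot_atTop.comp Real.tendsto_log_nhdsGT_zero
    have h2 : Tendsto (fun x : ℝ => Real.log c / (-Real.log x)) L (nhds 0) :=
      h1.const_div_atTop _
    have h3 := h2.neg
    simp only [div_neg, neg_neg, neg_zero] at h3
    exact h3
  -- conclude
  have hmain : ∀ ε : ℝ, 0 < ε →
      Filter.limsup (fun x : ℝ => Real.log (Z k x) / Real.log x) L ≤ (2 - 1/(k:ℝ)) + ε := by
    intro ε hε
    apply Filter.limsup_le_of_le hco
    have hev2 : ∀ᶠ x in L, Real.log c / Real.log x < ε := htend.eventually_lt_const hε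
    filter_upwards [hev, hev2] with x hx hx2
    obtain ⟨hZpos, hlogZ, hlogx, hlow⟩ := hbasic x hx
    have hdiv : Real.log (Z k x) / Real.log x
        ≤ (Real.log c + (2 - 1/(k:ℝ)) * Real.log x) / Real.log x :=
      (div_le_div_right_of_neg hlogx).mpr hlow
    have heq : (Real.log c + (2 - 1/(k:ℝ)) * Real.log x) / Real.log x
        = Real.log c / Real.log x + (2 - 1/(k:ℝ)) := by
      rw [add_div, mul_div_cancel_right₀ _ hlogx.ne]
    rw [heq] at hdiv
    linarith
  by_contra hcon
  push_neg at hcon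
  have hε : 0 < (Filter.limsup (fun x : ℝ => Real.log (Z k x) / Real.log x) L - (2 - 1/(k:ℝ)))/2 := by
    linarith
  have := hmain _ hε
  linarith
end
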